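/- Let λ : E × [0,∞) → ℝ be bounded by C_λ and satisfy |λ(x,s) - λ(y,s)| ≤ [λ]₁|x-y| for s ≤ t*(x) ∧ t*(y), let h : E × [0,∞) → ℝ be bounded by C_h with |h(x,s) - h(y,s)| ≤ [h]₁|x-y| for s ≤ t*(x) ∧ t*(y), and let t* : E → [0, C_{t*}] be Lipschitz with constant [t*]. Setting Λ(x,s) = ∫₀ˢ λ(x,u)du, for all x, y ∈ E and t ≤ t*(x) ∧ t*(y): |∫_t^{t*(x)} h(x,s)e^{-Λ(x,s)} ds − ∫_t^{t*(y)} h(y,s)e^{-Λ(y,s)} ds| ≤ (C_{t*}[h]₁ + (C_{t*}²[λ]₁ + [t*])C_h)|x − y|. -/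

import Mathlib

open MeasureTheory

private lemma bdd_meas_intInt {f : ℝ → ℝ} (hf : Measurable f) {C : ℝ} {a b : ℝ}
    (hC : ∀ s ∈ Set.uIoc a b, |f s| ≤ C) : IntervalIntegrable f volume a b := by
  constructor <;>
  · refine Integrable.mono' (g := fun _ => C)
      (integrableOn_const measure_Ioc_lt_top.ne) hf.aestronglyMeasurable.restrict ?_
    refine (ae_restrict_iff' measurableSet_Ioc).2 (ae_of_all _ fun s hs => ?_)
    rw [Real.norm_eq_abs]
    refine hC s ?_
    first
    | exact Set.Ioc_subset_uIoc hs
    | exact Set.Ioc_subset_uIoc' hs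

private lemma exp_neg_lip {a b : ℝ} (ha : 0 ≤ a) (hb : 0 ≤ b) :
    |Real.exp (-a) - Real.exp (-b)| ≤ |a - b| := by
  have key : ∀ u v : ℝ, 0 ≤ u → u ≤ v → Real.exp (-u) - Real.exp (-v) ≤ v - u := by
    intro u v hu huv
    have h1 : Real.exp (-v) = Real.exp (-u) * Real.exp (u - v) := by
      rw [← Real.exp_add]; ring_nf
    have h2 : (u - v) + 1 ≤ Real.exp (u - v) := Real.add_one_le_exp _
    have h3 : Real.exp (-u) ≤ 1 := Real.exp_le_one_iff.2 (by linarith)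
    have h4 : 0 < Real.exp (-u) := Real.exp_pos _
    nlinarith
  rcases le_total a b with hab | hab
  · have hm : Real.exp (-b) ≤ Real.exp (-a) := Real.exp_le_exp.2 (neg_le_neg hab)
    rw [abs_of_nonneg (sub_nonneg.2 hm), abs_of_nonpos (sub_nonpos.2 hab)]
    have := key a b ha hab
    linarith
  · have hm : Real.exp (-a) ≤ Real.exp (-b) := Real.exp_le_exp.2 (neg_le_neg hab)
    rw [abs_of_nonpos (sub_nonpos.2 hm), abs_of_nonneg (sub_nonneg.2 hab)]
    have := key b a hb hab
    linarith

theorem stmt4 {E : Type*} [MetricSpace E] (tstar : E → ℝ) (Ct Kt : ℝ)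
    (htnn : ∀ x, 0 ≤ tstar x) (htbd : ∀ x, tstar x ≤ Ct)
    (htLip : ∀ x y, |tstar x - tstar y| ≤ Kt * dist x y)
    (lam : E → ℝ → ℝ) (Clam Klam : ℝ)
    (hlmeas : ∀ x, Measurable (lam x))
    (hlnn : ∀ x s, 0 ≤ lam x s) (hlbd : ∀ x s, lam x s ≤ Clam)
    (hlLip : ∀ x y s, 0 ≤ s → s ≤ min (tstar x) (tstar y) →
      |lam x s - lam y s| ≤ Klam * dist x y)
    (h : E → ℝ → ℝ) (Ch Kh : ℝ)
    (hhmeas : ∀ x, Measurable (h x))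
    (hhbd : ∀ x s, |h x s| ≤ Ch)
    (hhLip : ∀ x y s, 0 ≤ s → s ≤ min (tstar x) (tstar y) →
      |h x s - h y s| ≤ Kh * dist x y)
    (Λ : E → ℝ → ℝ) (hΛ : ∀ x s, Λ x s = ∫ u in (0:ℝ)..s, lam x u) :
    ∀ x y t, 0 ≤ t → t ≤ min (tstar x) (tstar y) →
      |(∫ s in t..(tstar x), h x s * Real.exp (-(Λ x s)))
        - (∫ s in t..(tstar y), h y s * Real.exp (-(Λ y s)))|
      ≤ (Ct * Kh + (Ct^2 * Klam + Kt) * Ch) * dist x y := by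
  -- basic facts
  have hlam_int : ∀ z a b, IntervalIntegrable (lam z) volume a b := by
    intro z a b
    exact bdd_meas_intInt (hlmeas z) (fun s _ => by
      rw [abs_of_nonneg (hlnn z s)]; exact hlbd z s)
  have hΛcont : ∀ z, Continuous (Λ z) := by
    intro z
    have : Λ z = fun s => ∫ u in (0:ℝ)..s, lam z u := funext (hΛ z)
    rw [this]
    exact intervalIntegral.continuous_primitive (hlam_int z) 0
  have hΛnn : ∀ z s, 0 ≤ s → 0 ≤ Λ z s := by
    intro z s hs
    rw [hΛ]
    exact intervalIntegral.integral_nonneg hs (fun u _ => hlnn z u)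
  have hexple : ∀ z s, 0 ≤ s → Real.exp (-(Λ z s)) ≤ 1 := fun z s hs =>
    Real.exp_le_one_iff.2 (by linarith [hΛnn z s hs])
  have hfmeas : ∀ z : E, Measurable (fun s => h z s * Real.exp (-(Λ z s))) :=
    fun z => (hhmeas z).mul ((Real.continuous_exp.comp (hΛcont z).neg).measurable)
  -- interval integrability of f z on intervals with nonneg endpoints
  have hfint : ∀ (z : E) (a b : ℝ), 0 ≤ a → 0 ≤ b →
      IntervalIntegrable (fun s => h z s * Real.exp (-(Λ z s))) volume a b := by
    intro z a b ha hb
    refine bdd_meas_intInt (hfmeas z) (C := Ch) (fun s hs => ?_)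
    have hs0 : 0 ≤ s := le_of_lt (lt_of_le_of_lt (le_min ha hb) hs.1)
    rw [abs_mul, abs_of_nonneg (Real.exp_nonneg _)]
    have h1 := hhbd z s
    have h2 := hexple z s hs0
    have h3 := Real.exp_nonneg (-(Λ z s))
    nlinarith [abs_nonneg (h z s)]
  -- main symmetric auxiliary claim
  have main : ∀ x y t, 0 ≤ t → t ≤ min (tstar x) (tstar y) → tstar y ≤ tstar x →
      |(∫ s in t..(tstar x), h x s * Real.exp (-(Λ x s)))
        - (∫ s in t..(tstar y), h y s * Real.exp (-(Λ y s)))|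
      ≤ (Ct * Kh + (Ct^2 * Klam + Kt) * Ch) * dist x y := by
    intro x y t ht htmin hyx
    set d := dist x y with hd
    have hty : t ≤ tstar y := le_trans htmin (min_le_right _ _)
    have htynn : 0 ≤ tstar y := htnn y
    have hCt : 0 ≤ Ct := le_trans (htnn x) (htbd x)
    have hKhd : 0 ≤ Kh * d := le_trans (abs_nonneg _) (hhLip x y t ht htmin)
    have hKlamd : 0 ≤ Klam * d := le_trans (abs_nonneg _) (hlLip x y t ht htmin)
    have hCh : 0 ≤ Ch := le_trans (abs_nonneg _) (hhbd x t)
    have hKtd : tstar x - tstar y ≤ Kt * d := by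
      have := htLip x y
      rw [abs_le] at this; linarith [this.2]
    -- split the x-integral
    have hsplit : (∫ s in t..(tstar x), h x s * Real.exp (-(Λ x s)))
        = (∫ s in t..(tstar y), h x s * Real.exp (-(Λ x s)))
          + ∫ s in (tstar y)..(tstar x), h x s * Real.exp (-(Λ x s)) :=
      (intervalIntegral.integral_add_adjacent_intervals
        (hfint x t (tstar y) ht htynn) (hfint x (tstar y) (tstar x) htynn (htnn x))).symm
    -- bound the difference on [t, tstar y]
    have hA : |(∫ s in t..(tstar y), h x s * Real.exp (-(Λ x s)))
        - (∫ s in t..(tstar y), h y s * Real.exp (-(Λ y s)))|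
        ≤ (Kh * d + Ct * (Klam * d) * Ch) * (tstar y - t) := by
      rw [← intervalIntegral.integral_sub (hfint x t (tstar y) ht htynn)
        (hfint y t (tstar y) ht htynn)]
      have := intervalIntegral.norm_integral_le_of_norm_le_const
        (a := t) (b := tstar y) (C := Kh * d + Ct * (Klam * d) * Ch)
        (f := fun s => h x s * Real.exp (-(Λ x s)) - h y s * Real.exp (-(Λ y s))) ?_
      · rw [Real.norm_eq_abs] at this
        rwa [abs_of_nonneg (by linarith : (0:ℝ) ≤ tstar y - t)] at this
      intro s hs
      rw [Set.uIoc_of_le hty] at hs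
      have hs0 : 0 ≤ s := le_trans ht (le_of_lt hs.1)
      have hsmin : s ≤ min (tstar x) (tstar y) := le_min (le_trans hs.2 hyx) hs.2
      -- bound |Λ x s - Λ y s|
      have hΛdiff : |Λ x s - Λ y s| ≤ (Klam * d) * s := by
        rw [hΛ, hΛ, ← intervalIntegral.integral_sub (hlam_int x 0 s) (hlam_int y 0 s)]
        have := intervalIntegral.norm_integral_le_of_norm_le_const
          (a := 0) (b := s) (C := Klam * d) (f := fun u => lam x u - lam y u) ?_
        · rw [Real.norm_eq_abs] at this
          rwa [abs_of_nonneg (by linarith : (0:ℝ) ≤ s - 0), sub_zero] at this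
        intro u hu
        rw [Set.uIoc_of_le hs0] at hu
        exact hlLip x y u (le_of_lt hu.1) (le_trans hu.2 hsmin)
      have hexp : |Real.exp (-(Λ x s)) - Real.exp (-(Λ y s))| ≤ (Klam * d) * s :=
        le_trans (exp_neg_lip (hΛnn x s hs0) (hΛnn y s hs0)) hΛdiff
      have hhd : |h x s - h y s| ≤ Kh * d := hhLip x y s hs0 hsmin
      have heq : h x s * Real.exp (-(Λ x s)) - h y s * Real.exp (-(Λ y s))
          = (h x s - h y s) * Real.exp (-(Λ x s))
            + h y s * (Real.exp (-(Λ x s)) - Real.exp (-(Λ y s))) := by ring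
      rw [Real.norm_eq_abs, heq]
      calc |(h x s - h y s) * Real.exp (-(Λ x s))
            + h y s * (Real.exp (-(Λ x s)) - Real.exp (-(Λ y s)))|
          ≤ |(h x s - h y s)| * |Real.exp (-(Λ x s))|
            + |h y s| * |Real.exp (-(Λ x s)) - Real.exp (-(Λ y s))| := by
            refine le_trans (abs_add_le _ _) ?_
            rw [abs_mul, abs_mul]
        _ ≤ Kh * d + Ct * (Klam * d) * Ch := by
            have h1 : |Real.exp (-(Λ x s))| ≤ 1 := by
              rw [abs_of_nonneg (Real.exp_nonneg _)]; exact hexple x s hs0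
            have h2 : |h y s| ≤ Ch := hhbd y s
            have h3 : (Klam * d) * s ≤ (Klam * d) * Ct :=
              mul_le_mul_of_nonneg_left (le_trans (le_trans hsmin (min_le_right _ _))
                (htbd y)) hKlamd
            nlinarith [abs_nonneg (h x s - h y s), abs_nonneg (h y s),
              abs_nonneg (Real.exp (-(Λ x s)) - Real.exp (-(Λ y s))),
              abs_nonneg (Real.exp (-(Λ x s)))]
    -- bound the tail
    have hB : |∫ s in (tstar y)..(tstar x), h x s * Real.exp (-(Λ x s))|
        ≤ Ch * (tstar x - tstar y) := by
      have := intervalIntegral.norm_integral_le_of_norm_le_const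
        (a := tstar y) (b := tstar x) (C := Ch)
        (f := fun s => h x s * Real.exp (-(Λ x s))) ?_
      · rw [Real.norm_eq_abs] at this
        rwa [abs_of_nonneg (by linarith : (0:ℝ) ≤ tstar x - tstar y)] at this
      intro s hs
      rw [Set.uIoc_of_le hyx] at hs
      have hs0 : 0 ≤ s := le_trans htynn (le_of_lt hs.1)
      rw [Real.norm_eq_abs, abs_mul, abs_of_nonneg (Real.exp_nonneg _)]
      have h1 := hhbd x s
      have h2 := hexple x s hs0
      have h3 := Real.exp_nonneg (-(Λ x s))
      nlinarith [abs_nonneg (h x s)]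
    rw [hsplit]
    have htri : |(∫ s in t..(tstar y), h x s * Real.exp (-(Λ x s)))
          + (∫ s in (tstar y)..(tstar x), h x s * Real.exp (-(Λ x s)))
          - (∫ s in t..(tstar y), h y s * Real.exp (-(Λ y s)))|
        ≤ |(∫ s in t..(tstar y), h x s * Real.exp (-(Λ x s)))
          - (∫ s in t..(tstar y), h y s * Real.exp (-(Λ y s)))|
          + |∫ s in (tstar y)..(tstar x), h x s * Real.exp (-(Λ x s))| := by
      have := abs_add_le
        ((∫ s in t..(tstar y), h x s * Real.exp (-(Λ x s)))
          - (∫ s in t..(tstar y), h y s * Real.exp (-(Λ y s))))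
        (∫ s in (tstar y)..(tstar x), h x s * Real.exp (-(Λ x s)))
      convert this using 2
      all_goals first | rfl | ring
    refine le_trans htri ?_
    have hyt : tstar y - t ≤ Ct := by linarith [htbd y]
    have hfact : (Kh * d + Ct * (Klam * d) * Ch) * (tstar y - t)
        ≤ Ct * (Kh * d) + Ct ^ 2 * (Klam * d) * Ch := by
      have h1 : (Kh * d) * (tstar y - t) ≤ (Kh * d) * Ct := mul_le_mul_of_nonneg_left hyt hKhd
      have h2 : (Ct * (Klam * d) * Ch) * (tstar y - t) ≤ (Ct * (Klam * d) * Ch) * Ct :=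
        mul_le_mul_of_nonneg_left hyt (mul_nonneg (mul_nonneg hCt hKlamd) hCh)
      nlinarith
    have htail : Ch * (tstar x - tstar y) ≤ Ch * (Kt * d) :=
      mul_le_mul_of_nonneg_left hKtd hCh
    calc _ ≤ (Kh * d + Ct * (Klam * d) * Ch) * (tstar y - t) + Ch * (tstar x - tstar y) :=
          add_le_add hA hB
      _ ≤ (Ct * Kh + (Ct ^ 2 * Klam + Kt) * Ch) * d := by nlinarith
  intro x y t ht htmin
  rcases le_total (tstar y) (tstar x) with hc | hc
  · exact main x y t ht htmin hc
  · rw [abs_sub_comm, dist_comm]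
    refine main y x t ht (min_comm (tstar x) (tstar y) ▸ htmin) hc
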